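/- With λ, 𝝀, α and the S_d-action on cascades 𝒞(𝝀, α) as above, the action is free: for every cascade C, σ·C = C implies σ = 1. -/

import Mathlib

/-- Murnaghan–Nakayama recursion on beta-sets: `MNchar S α` computes the character
value via successive rim-hook (border-strip) removals encoded by beta-numbers. -/
def MNchar : Finset ℕ → List ℕ → ℤ
  | S, [] => if S = Finset.range S.card then 1 else 0
  | S, k :: rest =>
      ∑ s ∈ S.filter (fun s => k ≤ s ∧ s - k ∉ S),
        (-1 : ℤ) ^ (S.filter (fun t => s - k < t ∧ t < s)).card *
          MNchar (insert (s - k) (S.erase s)) rest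

/-- Canonical beta-set of a partition (given as a multiset of parts). -/
def betaSet (P : Multiset ℕ) : Finset ℕ :=
  ((List.range (P.sort (· ≤ ·)).length).map
    (fun i => (P.sort (· ≤ ·)).getD i 0 + i)).toFinset

/-- Irreducible character of the symmetric group indexed by `lam`, at cycle type `mu`. -/
def chi (lam mu : Multiset ℕ) : ℤ := MNchar (betaSet lam) (mu.sort (· ≤ ·))

/-- d-fold dilation of a partition: each part p becomes d copies of d*p. -/
def dilate (d : ℕ) (P : Multiset ℕ) : Multiset ℕ :=
  P.bind fun p => Multiset.replicate d (d * p)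

/-- Scale every part of a partition by d. -/
def scale (d : ℕ) (P : Multiset ℕ) : Multiset ℕ := P.map (d * ·)

def IsPartitionOf (n : ℕ) (P : Multiset ℕ) : Prop := (∀ p ∈ P, 0 < p) ∧ P.sum = n

def zerosBefore (β : List Bool) (j : ℕ) : ℕ := (β.take j).count false

/-- Shape of a binary sequence: one part for each `true`, equal to the number of
`false`s to its left (zero parts discarded). -/
def shapeOf (β : List Bool) : Multiset ℕ :=
  ↑((List.range β.length).filterMap fun j =>
      if β.getD j false = true ∧ 0 < zerosBefore β j then some (zerosBefore β j) else none)

/-- The word of a partition: the unique binary sequence starting with 0 and ending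
with 1 whose shape is the partition. -/
def word (P : Multiset ℕ) : List Bool :=
  (List.range (P.sup + Multiset.card P)).map fun j => decide (j ∈ betaSet P)

/-- Cells of the Young diagram of a partition. -/
def cells (P : Multiset ℕ) : Finset (ℕ × ℕ) :=
  (Finset.range (Multiset.card P) ×ˢ Finset.range (P.sup + 1)).filter
    fun x => x.2 < ((P.sort (· ≤ ·)).reverse.getD x.1 0)

def CellAdj (x y : ℕ × ℕ) : Prop :=
  (x.1 = y.1 ∧ (x.2 = y.2 + 1 ∨ y.2 = x.2 + 1)) ∨
  (x.2 = y.2 ∧ (x.1 = y.1 + 1 ∨ y.1 = x.1 + 1))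

/-- A set of cells is a rim hook: nonempty, connected, no 2×2 square. -/
def IsRimHook (s : Finset (ℕ × ℕ)) : Prop :=
  s.Nonempty ∧
  (∀ x ∈ s, ∀ y ∈ s, Relation.ReflTransGen (fun u v => v ∈ s ∧ CellAdj u v) x y) ∧
  ∀ i j : ℕ, ¬((i, j) ∈ s ∧ (i + 1, j) ∈ s ∧ (i, j + 1) ∈ s ∧ (i + 1, j + 1) ∈ s)

/-- A cascade, encoded by its first row and the sequence of 0-1 swap positions
`(aᵢ, bᵢ)` relating consecutive rows. -/
structure Cascade where
  top : List Bool
  swaps : List (ℕ × ℕ)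

def applySwaps (r : List Bool) (s : List (ℕ × ℕ)) : List Bool :=
  s.foldl (fun r ab => (r.set ab.1 true).set ab.2 false) r

def cascadeRow (C : Cascade) (i : ℕ) : List Bool := applySwaps C.top (C.swaps.take i)

def cascadeBot (C : Cascade) : List Bool := applySwaps C.top C.swaps

/-- The defining conditions of a cascade. -/
def Cascade.Valid (C : Cascade) : Prop :=
  C.top.head? = some false ∧ C.top.getLast? = some true ∧
  (∀ i < C.swaps.length,
    (C.swaps.getD i (0, 0)).1 < (C.swaps.getD i (0, 0)).2 ∧
    (C.swaps.getD i (0, 0)).2 < (cascadeRow C i).length ∧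
    (cascadeRow C i).getD (C.swaps.getD i (0, 0)).1 true = false ∧
    (cascadeRow C i).getD (C.swaps.getD i (0, 0)).2 false = true) ∧
  ∃ u v, cascadeBot C = List.replicate u true ++ List.replicate v false

def cascadeShape (C : Cascade) : Multiset ℕ := shapeOf C.top

def cascadeContent (C : Cascade) : List ℕ := C.swaps.map fun ab => ab.2 - ab.1

/-- Crossings of a cascade: pairs (i,j) with row i having a 1 in position j
strictly between the swapped positions aᵢ < j < bᵢ. -/
def cascadeCrossings (C : Cascade) : Finset (ℕ × ℕ) :=
  (Finset.range C.swaps.length ×ˢ Finset.range C.top.length).filter fun ij =>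
    (cascadeRow C ij.1).getD ij.2 false = true ∧
    (C.swaps.getD ij.1 (0, 0)).1 < ij.2 ∧ ij.2 < (C.swaps.getD ij.1 (0, 0)).2

def cascadeWt (C : Cascade) : ℤ := (-1) ^ (cascadeCrossings C).card

def traceSwaps (s : List (ℕ × ℕ)) (p : ℕ) : ℕ :=
  s.foldl (fun p ab => if p = ab.1 then ab.2 else if p = ab.2 then ab.1 else p) p

/-- The path starting in column x: its position after i swaps. -/
def cascadePath (C : Cascade) (x i : ℕ) : ℕ := traceSwaps (C.swaps.take i) x

def onesPositions (r : List Bool) : List ℕ :=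
  (List.range r.length).filter fun j => r.getD j false

/-- The permutation π_C associated to a cascade, as a function on {0,…,k−1}. -/
def cascadePerm (C : Cascade) (j : ℕ) : ℕ :=
  (onesPositions (cascadeBot C)).idxOf
    (traceSwaps C.swaps ((onesPositions C.top).getD j 0))

/-- Sign of a function on {0,…,k−1} via inversion count. -/
def signOf (f : ℕ → ℕ) (k : ℕ) : ℤ :=
  (-1) ^ ((Finset.range k ×ˢ Finset.range k).filter fun p =>
      p.1 < p.2 ∧ f p.2 < f p.1).card

/-- Crossings of the two paths starting in columns x and y. -/
def pathCrossings (C : Cascade) (x y : ℕ) : Finset (ℕ × ℕ) :=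
  (Finset.range C.swaps.length ×ˢ Finset.range C.top.length).filter fun ij =>
    cascadePath C x ij.1 = ij.2 ∧ cascadePath C x ij.1 < cascadePath C y ij.1 ∧
    cascadePath C y (ij.1 + 1) < cascadePath C x (ij.1 + 1)

def rimRows (s : Finset (ℕ × ℕ)) : ℕ := (s.image Prod.fst).card

/-- A rim hook tableau, as the chain of successive shapes λ¹ ⊃ … ⊃ λ^{m+1} = ∅. -/
def IsRHT (T : List (Multiset ℕ)) : Prop :=
  2 ≤ T.length ∧ (∀ P ∈ T, ∀ p ∈ P, 0 < p) ∧ T.getLast? = some 0 ∧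
  ∀ i, i + 1 < T.length →
    cells (T.getD (i + 1) 0) ⊆ cells (T.getD i 0) ∧
    IsRimHook (cells (T.getD i 0) \ cells (T.getD (i + 1) 0))

def tabShape (T : List (Multiset ℕ)) : Multiset ℕ := T.headI

def tabContent (T : List (Multiset ℕ)) : List ℕ :=
  (List.range (T.length - 1)).map fun i =>
    (cells (T.getD i 0) \ cells (T.getD (i + 1) 0)).card

def tabWt (T : List (Multiset ℕ)) : ℤ :=
  ∏ i ∈ Finset.range (T.length - 1),
    (-1 : ℤ) ^ (rimRows (cells (T.getD i 0) \ cells (T.getD (i + 1) 0)) - 1)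

/-- Θ : cascades → rim hook tableaux, via the shapes of the successive rows. -/
def theta (C : Cascade) : List (Multiset ℕ) :=
  (List.range (C.swaps.length + 1)).map fun i => shapeOf (cascadeRow C i)

/-- The block column permutation: j = i + d·k with i < d goes to σ(i) + d·k. -/
def gammaMap (d : ℕ) (σ : Equiv.Perm (Fin d)) (j : ℕ) : ℕ :=
  if h : 0 < d then d * (j / d) + (σ ⟨j % d, Nat.mod_lt j h⟩ : ℕ) else j

def permuteCols (d : ℕ) (σ : Equiv.Perm (Fin d)) (r : List Bool) : List Bool :=
  (List.range r.length).map fun j => r.getD (gammaMap d σ⁻¹ j) false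

/-- The action of σ ∈ S_d on a cascade: permute columns within blocks of size d. -/
def actC (d : ℕ) (σ : Equiv.Perm (Fin d)) (C : Cascade) : Cascade :=
  ⟨permuteCols d σ C.top, C.swaps.map fun ab => (gammaMap d σ ab.1, gammaMap d σ ab.2)⟩

section AuxProofs

open List

/-- generic: map equal to self means pointwise fixed -/
lemma list_map_eq_self_aux {α : Type*} {f : α → α} :
    ∀ l : List α, l.map f = l → ∀ a ∈ l, f a = a := by
  intro l
  induction l with
  | nil => intro _ a ha; cases ha
  | cons x t ih =>
      intro h a ha
      rw [List.map_cons] at h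
      obtain ⟨h1, h2⟩ := List.cons.inj h
      cases ha with
      | head => exact h1
      | tail _ ha => exact ih h2 a ha

lemma applySwaps_nil (r : List Bool) : applySwaps r [] = r := rfl

lemma applySwaps_cons (r : List Bool) (ab : ℕ × ℕ) (s : List (ℕ × ℕ)) :
    applySwaps r (ab :: s) = applySwaps ((r.set ab.1 true).set ab.2 false) s := rfl

lemma applySwaps_append (r : List Bool) (s t : List (ℕ × ℕ)) :
    applySwaps r (s ++ t) = applySwaps (applySwaps r s) t := by
  simp [applySwaps]

/-- if column j is false at top and true at bottom, and all second coordinates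
exceed j, then some swap has first coordinate j. -/
lemma exists_flip (j : ℕ) :
    ∀ (s : List (ℕ × ℕ)) (r : List Bool), (∀ ab ∈ s, j < ab.2) →
      r.getD j false = false → (applySwaps r s).getD j false = true →
      ∃ ab ∈ s, ab.1 = j := by
  intro s
  induction s with
  | nil => intro r _ h0 h1; rw [applySwaps_nil] at h1; rw [h0] at h1; cases h1
  | cons ab s ih =>
      intro r hb h0 h1
      rw [applySwaps_cons] at h1
      by_cases hc : ((r.set ab.1 true).set ab.2 false).getD j false = false
      · obtain ⟨cd, hcd, h⟩ := ih _ (fun x hx => hb x (List.mem_cons_of_mem _ hx)) hc h1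
        exact ⟨cd, List.mem_cons_of_mem _ hcd, h⟩
      · by_cases hj : ab.1 = j
        · exact ⟨ab, List.mem_cons_self, hj⟩
        · exfalso
          have hbj : ab.2 ≠ j := by
            have := hb ab (List.mem_cons_self); omega
          have : ((r.set ab.1 true).set ab.2 false).getD j false = r.getD j false := by
            rw [List.getD_eq_getElem?_getD, List.getD_eq_getElem?_getD,
              List.getElem?_set_ne hbj, List.getElem?_set_ne hj]
          rw [this, h0] at hc
          exact hc rfl

lemma count_set_aux (l : List Bool) (i : ℕ) (v : Bool) (h : i < l.length) :
    (l.set i v).count true + (if l[i] = true then 1 else 0)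
      = l.count true + (if v = true then 1 else 0) := by
  conv_rhs => rw [← List.take_append_drop i l]
  rw [List.set_eq_take_cons_drop v h]
  have hd : l.drop i = l[i] :: l.drop (i + 1) := (List.getElem_cons_drop h).symm
  rw [hd]
  simp only [List.count_append, List.count_cons]
  by_cases hv : v = true <;> by_cases hl : l[i] = true <;>
    simp [hv, hl] <;> omega

/-- a valid swap preserves the number of trues -/
lemma count_swap (r : List Bool) (a b : ℕ) (hab : a ≠ b)
    (ha : r.getD a true = false) (hb : r.getD b false = true) :
    ((r.set a true).set b false).count true = r.count true := by
  have hal : a < r.length := by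
    by_contra hc
    rw [List.getD_eq_default _ _ (Nat.le_of_not_lt hc)] at ha; cases ha
  have hbl : b < r.length := by
    by_contra hc
    rw [List.getD_eq_default _ _ (Nat.le_of_not_lt hc)] at hb; cases hb
  have ha' : r[a] = false := by rw [List.getD_eq_getElem _ _ hal] at ha; exact ha
  have hb' : r[b] = true := by rw [List.getD_eq_getElem _ _ hbl] at hb; exact hb
  have hbl2 : b < (r.set a true).length := by simpa using hbl
  have h1 := count_set_aux (r.set a true) b false hbl2
  have h2 := count_set_aux r a true hal
  have hb2 : (r.set a true)[b]'hbl2 = r[b]'hbl := List.getElem_set_ne hab hbl2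
  rw [hb2, hb'] at h1
  rw [ha'] at h2
  simp at h1 h2
  omega

lemma length_applySwaps (r : List Bool) (s : List (ℕ × ℕ)) :
    (applySwaps r s).length = r.length := by
  induction s generalizing r with
  | nil => rfl
  | cons ab s ih => rw [applySwaps_cons, ih]; simp

lemma countP_range_getD (β : List Bool) :
    (List.range β.length).countP (fun j => β.getD j false) = β.count true := by
  induction β with
  | nil => rfl
  | cons x t ih =>
      rw [List.length_cons, List.range_succ_eq_map, List.countP_cons, List.countP_map,
        List.count_cons]
      have he : ((fun j => (x :: t).getD j false) ∘ Nat.succ) = (fun j => t.getD j false) := by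
        funext j; simp
      rw [he, ih]
      cases x <;> simp

lemma length_filterMap_le_countP {α β : Type*} (f : α → Option β) (l : List α) :
    (l.filterMap f).length ≤ l.countP (fun a => (f a).isSome) := by
  induction l with
  | nil => simp
  | cons x t ih =>
      rw [List.filterMap_cons, List.countP_cons]
      cases hfx : f x <;> simp [hfx] <;> omega

end AuxProofs

/-- The S_d-action on cascades of shape 𝝀 and content α is free. -/
theorem action_free (d n : ℕ) (hd : 0 < d) (hn : 0 < n)
    (lam : Multiset ℕ) (hlam : IsPartitionOf n lam)
    (alpha : List ℕ) (halpha : ∀ a ∈ alpha, 0 < a ∧ d ∣ a) (hsum : alpha.sum = d ^ 2 * n) :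
    ∀ (σ : Equiv.Perm (Fin d)) (C : Cascade),
      C.Valid → cascadeShape C = dilate d lam → cascadeContent C = alpha →
        actC d σ C = C → σ = 1 := by
  intro σ C hV hS hCt hact
  obtain ⟨hhead, hlast, hsw, u, v, hbot⟩ := hV
  -- the top row starts with a false
  obtain ⟨t, htop⟩ : ∃ t, C.top = false :: t := by
    cases h : C.top with
    | nil => rw [h] at hhead; cases hhead
    | cons x t =>
        rw [h] at hhead
        injection hhead with hx
        exact ⟨t, by rw [hx]⟩
  -- every part of the dilated partition is at least d
  have hdil : ∀ a ∈ dilate d lam, d ≤ a := by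
    intro a ha
    rw [dilate, Multiset.mem_bind] at ha
    obtain ⟨p, hp, ha⟩ := ha
    rw [Multiset.eq_of_mem_replicate ha]
    have := hlam.1 p hp
    calc d = d * 1 := by omega
    _ ≤ d * p := Nat.mul_le_mul_left d this
  have hshape : shapeOf C.top = dilate d lam := hS
  -- the first d entries of the top row are false
  have htopf : ∀ j < d, C.top.getD j false = false := by
    intro j hj
    by_cases hlen : j < C.top.length
    · cases hb : C.top.getD j false with
      | false => rfl
      | true =>
          exfalso
          have hz : 0 < zerosBefore C.top j := by
            cases j with
            | zero => rw [htop] at hb; cases hb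
            | succ k =>
                rw [zerosBefore, htop]
                simp [List.count_cons]
          have hmem : zerosBefore C.top j ∈ shapeOf C.top := by
            rw [shapeOf]
            rw [Multiset.mem_coe, List.mem_filterMap]
            exact ⟨j, List.mem_range.mpr hlen, by rw [if_pos ⟨hb, hz⟩]⟩
          rw [hshape] at hmem
          have h1 := hdil _ hmem
          have h2 : zerosBefore C.top j ≤ j := by
            calc zerosBefore C.top j ≤ (C.top.take j).length := List.count_le_length
            _ ≤ j := List.length_take_le _ _
          omega
    · exact List.getD_eq_default _ _ (Nat.le_of_not_lt hlen)
  -- the top row has at least d trues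
  have hcount : d ≤ C.top.count true := by
    have hlamne : lam ≠ 0 := by
      intro h; rw [h] at hlam; simp [IsPartitionOf] at hlam; omega
    have hcardlam : 1 ≤ Multiset.card lam := by
      rwa [Nat.one_le_iff_ne_zero, Ne, Multiset.card_eq_zero]
    have hcarddil : Multiset.card (dilate d lam) = d * Multiset.card lam := by
      rw [dilate, Multiset.card_bind]
      simp [mul_comm]
    have hlen1 : Multiset.card (shapeOf C.top) ≤ C.top.count true := by
      rw [shapeOf, Multiset.coe_card]
      calc _ ≤ (List.range C.top.length).countP
            (fun j => (if C.top.getD j false = true ∧ 0 < zerosBefore C.top j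
              then some (zerosBefore C.top j) else none).isSome) :=
          length_filterMap_le_countP _ _
      _ ≤ (List.range C.top.length).countP (fun j => C.top.getD j false) := by
          apply List.countP_mono_left
          intro x _ hx
          by_cases hc : C.top.getD x false = true ∧ 0 < zerosBefore C.top x
          · exact hc.1
          · simp only [if_neg hc, Option.isSome_none] at hx; cases hx
      _ = C.top.count true := countP_range_getD _
    rw [hshape, hcarddil] at hlen1
    calc d = d * 1 := by omega
    _ ≤ d * Multiset.card lam := Nat.mul_le_mul_left d hcardlam
    _ ≤ C.top.count true := hlen1
  -- every row has the same number of trues as the top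
  have hrow : ∀ i ≤ C.swaps.length, (cascadeRow C i).count true = C.top.count true := by
    intro i
    induction i with
    | zero => intro _; rfl
    | succ i ih =>
        intro h
        have hi : i < C.swaps.length := Nat.lt_of_succ_le h
        obtain ⟨hab, hb2, hga, hgb⟩ := hsw i hi
        have habi : C.swaps[i] = C.swaps.getD i (0, 0) :=
          (List.getD_eq_getElem _ _ hi).symm
        have hstep : cascadeRow C (i + 1) =
            ((cascadeRow C i).set (C.swaps.getD i (0, 0)).1 true).set
              (C.swaps.getD i (0, 0)).2 false := by
          show applySwaps C.top (C.swaps.take (i + 1)) = _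
          rw [List.take_succ, List.getElem?_eq_getElem hi, habi, Option.toList_some,
            applySwaps_append]
          rfl
        rw [hstep, count_swap _ _ _ (Nat.ne_of_lt hab) hga hgb]
        exact ih (Nat.le_of_lt hi)
  -- the bottom row has count = u, so u ≥ d
  have hbc : (cascadeBot C).count true = C.top.count true := by
    have hb : cascadeBot C = cascadeRow C C.swaps.length := by
      rw [cascadeBot, cascadeRow, List.take_length]
    rw [hb]
    exact hrow _ le_rfl
  rw [hbot, List.count_append, List.count_replicate_self, List.count_replicate] at hbc
  norm_num at hbc
  -- the first d entries of the bottom row are true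
  have hbotj : ∀ j < d, (cascadeBot C).getD j false = true := by
    intro j hj
    have hju : j < u := by omega
    rw [hbot, List.getD_eq_getElem?_getD,
      List.getElem?_append_left (by simpa using hju),
      List.getElem?_replicate_of_lt hju]
    rfl
  -- every swap's second coordinate is at least d
  have hsec : ∀ ab ∈ C.swaps, d ≤ ab.2 := by
    intro ab hab
    have hmem : ab.2 - ab.1 ∈ alpha := by
      rw [← hCt, cascadeContent]
      exact List.mem_map_of_mem hab
    obtain ⟨hpos, hdvd⟩ := halpha _ hmem
    have := Nat.le_of_dvd hpos hdvd
    omega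
  -- the swaps are fixed by σ
  have h2 : (C.swaps.map fun ab => (gammaMap d σ ab.1, gammaMap d σ ab.2)) = C.swaps :=
    congrArg Cascade.swaps hact
  have hfix : ∀ j < d, gammaMap d σ j = j := by
    intro j hj
    obtain ⟨ab, hab, hab1⟩ := exists_flip j C.swaps C.top
      (fun ab h => lt_of_lt_of_le hj (hsec ab h)) (htopf j hj) (hbotj j hj)
    have hfa := list_map_eq_self_aux _ h2 ab hab
    have := congrArg Prod.fst hfa
    simp only at this
    rw [hab1] at this
    exact this
  -- conclude σ = 1
  apply Equiv.ext
  intro x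
  have hx := hfix x.1 x.2
  rw [gammaMap, dif_pos hd] at hx
  have h0 : (x : ℕ) / d = 0 := Nat.div_eq_of_lt x.2
  have h1 : (x : ℕ) % d = x := Nat.mod_eq_of_lt x.2
  have hfin : (⟨(x : ℕ) % d, Nat.mod_lt _ hd⟩ : Fin d) = x := Fin.ext h1
  rw [hfin, h0, Nat.mul_zero, Nat.zero_add] at hx
  exact Fin.ext hx
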